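/- Matrix elements of the six-vertex B-operator: let M ≥ 1, N ≥ 0, β, v ∈ ℂ with βv ≠ 1 and βv ≠ −1, and set z = v/(1−βv). Let m ∈ {0,1}^M with ∑ m_j = N+1, corresponding to the strict partition y = (y₁ > ⋯ > y_{N+1} ≥ 1), and n ∈ {0,1}^M with ∑ n_j = N, corresponding to the strict partition x = (x₁ > ⋯ > x_N ≥ 1). If y ≻ x then ⟨m| B(v) |n⟩ = (1+2βz)(1+βz)^{−(M+1)} · (2(1+βz)/(1+2βz))^{#(y|x)} · z^{(∑_{j=1}^{N+1} y_j) − (∑_{j=1}^N x_j)} · ∏_{j=1}^N (1 + 2βz(1 − δ_{x_j, y_{j+1}})), where the last product is taken to be 1 when N = 0; and ⟨m| B(v) |n⟩ = 0 if y ≻ x fails. -/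

import Mathlib

noncomputable section

def L6 (β v : ℂ) : Matrix (Fin 2 × Fin 2) (Fin 2 × Fin 2) ℂ :=
  fun p q =>
    if p = ((0 : Fin 2), (0 : Fin 2)) ∧ q = (0, 0) then 1 - β * v
    else if p = (0, 1) ∧ q = (0, 1) then 1 + β * v
    else if p = (0, 1) ∧ q = (1, 0) then 2 * v
    else if p = (1, 0) ∧ q = (0, 1) then 1
    else if p = (1, 0) ∧ q = (1, 0) then v
    else if p = (1, 1) ∧ q = (1, 1) then v
    else 0

def siteOp (M : ℕ) (L : Matrix (Fin 2 × Fin 2) (Fin 2 × Fin 2) ℂ) (j : Fin M) :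
    Matrix (Fin 2 × (Fin M → Fin 2)) (Fin 2 × (Fin M → Fin 2)) ℂ :=
  fun p q => L (p.1, p.2 j) (q.1, q.2 j) *
    (if ∀ k, k ≠ j → p.2 k = q.2 k then 1 else 0)

def monoH (M : ℕ) (L : Matrix (Fin 2 × Fin 2) (Fin 2 × Fin 2) ℂ) :
    Matrix (Fin 2 × (Fin M → Fin 2)) (Fin 2 × (Fin M → Fin 2)) ℂ :=
  (List.ofFn fun k : Fin M => siteOp M L k.rev).prod

def BopH (M : ℕ) (β v : ℂ) : Matrix (Fin M → Fin 2) (Fin M → Fin 2) ℂ :=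
  fun s s' => monoH M (L6 β v) (0, s) (1, s')

namespace SVaux

open Finset

def Qgen {ι : Type} [Fintype ι] [DecidableEq ι] (F : ℕ → Matrix ι ι ℂ) : ℕ → Matrix ι ι ℂ
  | 0 => 1
  | (j+1) => F j * Qgen F j

lemma ofFn_prod_eq_Qgen {ι : Type} [Fintype ι] [DecidableEq ι] (F : ℕ → Matrix ι ι ℂ) :
    ∀ t : ℕ, (List.ofFn fun k : Fin t => F (t - 1 - (k : ℕ))).prod = Qgen F t := by
  intro t
  induction t with
  | zero => simp [Qgen]
  | succ t ih =>
    rw [List.ofFn_succ, List.prod_cons]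
    have h1 : (List.ofFn fun i : Fin t =>
        (fun k : Fin (t+1) => F (t + 1 - 1 - (k : ℕ))) i.succ)
        = List.ofFn fun k : Fin t => F (t - 1 - (k : ℕ)) := by
      congr 1
      funext k
      show F (t + 1 - 1 - ((k.succ : Fin (t+1)) : ℕ)) = F (t - 1 - (k : ℕ))
      have hnat : t + 1 - 1 - ((k.succ : Fin (t+1)) : ℕ) = t - 1 - (k : ℕ) := by
        rw [Fin.val_succ]; omega
      rw [hnat]
    rw [h1, ih]
    have h00 : ((0 : Fin (t+1)) : ℕ) = 0 := rfl
    have h0 : t + 1 - 1 - ((0 : Fin (t+1)) : ℕ) = t := by omega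
    rw [h0]
    rfl

def Fm (M : ℕ) (β v : ℂ) (j : ℕ) : Matrix (Fin 2 × (Fin M → Fin 2)) (Fin 2 × (Fin M → Fin 2)) ℂ :=
  if h : j < M then siteOp M (L6 β v) ⟨j, h⟩ else 1

lemma monoH_eq_Qgen (M : ℕ) (β v : ℂ) : monoH M (L6 β v) = Qgen (Fm M β v) M := by
  have hfn : (fun k : Fin M => siteOp M (L6 β v) k.rev)
      = fun k : Fin M => Fm M β v (M - 1 - (k : ℕ)) := by
    funext k
    have hk : M - 1 - (k : ℕ) < M := by have := k.isLt; omega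
    rw [Fm, dif_pos hk]
    have hrev : k.rev = (⟨M - 1 - (k : ℕ), hk⟩ : Fin M) := by
      ext
      simp [Fin.val_rev]
      omega
    rw [hrev]
  rw [monoH, hfn, ofFn_prod_eq_Qgen]

def Sfun (M : ℕ) (β v : ℂ) (m n : Fin M → Fin 2) : ℕ → Fin 2 → Fin 2 → ℂ
  | 0 => fun a b => if a = b then 1 else 0
  | (j+1) => fun a b =>
      if h : j < M then
        ∑ c : Fin 2, L6 β v (a, m ⟨j, h⟩) (c, n ⟨j, h⟩) * Sfun M β v m n j c b
      else Sfun M β v m n j a b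

lemma fin2_cases : ∀ q : Fin 2, q = 0 ∨ q = 1 := by decide

lemma Qgen_entry (M : ℕ) (β v : ℂ) (m n : Fin M → Fin 2) :
    ∀ j, j ≤ M → ∀ (s : Fin M → Fin 2) (a b : Fin 2),
      (∀ k : Fin M, (k : ℕ) < j → s k = m k) →
      Qgen (Fm M β v) j (a, s) (b, n) =
        (if ∀ k : Fin M, j ≤ (k : ℕ) → s k = n k then 1 else 0) * Sfun M β v m n j a b := by
  intro j
  induction j with
  | zero =>
    intro _ s a b _
    simp only [Qgen, Sfun, Matrix.one_apply, Prod.mk.injEq]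
    by_cases hab : a = b <;> by_cases hs : s = n
    · simp [hab, hs]
    · have hns : ¬ (∀ k : Fin M, 0 ≤ (k:ℕ) → s k = n k) :=
        fun hc => hs (funext fun k => hc k (Nat.zero_le _))
      rw [if_neg (by tauto), if_neg hns, zero_mul]
    · simp [hab, hs]
    · have hns : ¬ (∀ k : Fin M, 0 ≤ (k:ℕ) → s k = n k) :=
        fun hc => hs (funext fun k => hc k (Nat.zero_le _))
      rw [if_neg (by tauto), if_neg hns, zero_mul]
  | succ j ih =>
    intro hj s a b hs
    have h : j < M := hj
    set jf : Fin M := ⟨j, h⟩ with hjf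
    have hFm : Fm M β v j = siteOp M (L6 β v) jf := dif_pos h
    rw [show Qgen (Fm M β v) (j+1) = Fm M β v j * Qgen (Fm M β v) j from rfl, hFm]
    rw [Matrix.mul_apply]
    rw [Fintype.sum_prod_type]
    set u0 : Fin M → Fin 2 := Function.update s jf 0 with hu0
    set u1 : Fin M → Fin 2 := Function.update s jf 1 with hu1
    have hu01 : u0 ≠ u1 := by
      intro hc
      have := congrFun hc jf
      simp [hu0, hu1] at this
    have key : ∀ c : Fin 2, ∀ t : Fin M → Fin 2,
        siteOp M (L6 β v) jf (a, s) (c, t) * Qgen (Fm M β v) j (c, t) (b, n) =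
        (if t = u0 then L6 β v (a, s jf) (c, 0) * Qgen (Fm M β v) j (c, u0) (b, n) else 0)
        + (if t = u1 then L6 β v (a, s jf) (c, 1) * Qgen (Fm M β v) j (c, u1) (b, n) else 0) := by
      intro c t
      by_cases hoff : ∀ k, k ≠ jf → s k = t k
      · have ht : t = Function.update s jf (t jf) := by
          funext k
          by_cases hk : k = jf
          · subst hk; simp
          · rw [Function.update_of_ne hk]
            exact (hoff k hk).symm
        rcases fin2_cases (t jf) with h0 | h0
        · have ht0 : t = u0 := by rw [ht, h0]
          have ht1 : t ≠ u1 := by rw [ht0]; exact hu01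
          rw [if_pos ht0, if_neg ht1, siteOp, if_pos hoff]
          rw [ht0] at h0 ⊢
          simp [h0]
        · have ht1 : t = u1 := by rw [ht, h0]
          have ht0 : t ≠ u0 := by rw [ht1]; exact fun hc => hu01 hc.symm
          rw [if_pos ht1, if_neg ht0, siteOp, if_pos hoff]
          rw [ht1] at h0 ⊢
          simp [h0]
      · have ht0 : t ≠ u0 := by
          intro hc; subst hc; exact hoff (fun k hk => (Function.update_of_ne hk _ _).symm)
        have ht1 : t ≠ u1 := by
          intro hc; subst hc; exact hoff (fun k hk => (Function.update_of_ne hk _ _).symm)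
        rw [if_neg ht0, if_neg ht1, siteOp, if_neg hoff]
        ring
    have hrw : ∀ c : Fin 2,
        (∑ t : Fin M → Fin 2, siteOp M (L6 β v) jf (a, s) (c, t) * Qgen (Fm M β v) j (c, t) (b, n))
        = L6 β v (a, s jf) (c, 0) * Qgen (Fm M β v) j (c, u0) (b, n)
          + L6 β v (a, s jf) (c, 1) * Qgen (Fm M β v) j (c, u1) (b, n) := by
      intro c
      rw [Finset.sum_congr rfl (fun t _ => key c t), Finset.sum_add_distrib,
        Finset.sum_ite_eq' Finset.univ u0, Finset.sum_ite_eq' Finset.univ u1]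
      simp
    rw [Finset.sum_congr rfl (fun c _ => hrw c)]
    -- apply IH
    have hmem : ∀ (i : Fin 2), ∀ k : Fin M, (k:ℕ) < j → Function.update s jf i k = m k := by
      intro i k hk
      have hkj : k ≠ jf := by
        intro hc; subst hc; simp [hjf] at hk
      rw [Function.update_of_ne hkj]
      exact hs k (by omega)
    have hcond : ∀ i : Fin 2,
        (∀ k : Fin M, j ≤ (k:ℕ) → Function.update s jf i k = n k)
        ↔ (i = n jf ∧ ∀ k : Fin M, j + 1 ≤ (k:ℕ) → s k = n k) := by
      intro i
      constructor
      · intro hc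
        constructor
        · have := hc jf (le_refl j)
          simpa using this
        · intro k hk
          have hkj : k ≠ jf := by
            intro hcc; rw [hcc] at hk
            have : (jf : ℕ) = j := rfl
            omega
          have := hc k (by omega)
          rwa [Function.update_of_ne hkj] at this
      · rintro ⟨hi, hcc⟩ k hk
        by_cases hkj : k = jf
        · subst hkj; simpa using hi
        · rw [Function.update_of_ne hkj]
          have : (k:ℕ) ≠ j := fun hc => hkj (Fin.ext hc)
          exact hcc k (by omega)
    have hsm : s jf = m jf := hs jf (by simp [hjf])
    have e0 : ∀ c : Fin 2, Qgen (Fm M β v) j (c, u0) (b, n)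
        = (if (0 : Fin 2) = n jf ∧ (∀ k : Fin M, j + 1 ≤ (k:ℕ) → s k = n k) then 1 else 0)
          * Sfun M β v m n j c b := by
      intro c
      rw [ih (by omega) u0 c b (hmem 0)]
      congr 1
      exact if_congr (hcond 0) rfl rfl
    have e1 : ∀ c : Fin 2, Qgen (Fm M β v) j (c, u1) (b, n)
        = (if (1 : Fin 2) = n jf ∧ (∀ k : Fin M, j + 1 ≤ (k:ℕ) → s k = n k) then 1 else 0)
          * Sfun M β v m n j c b := by
      intro c
      rw [ih (by omega) u1 c b (hmem 1)]
      congr 1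
      exact if_congr (hcond 1) rfl rfl
    simp only [e0, e1]
    have hS : Sfun M β v m n (j+1) a b
        = ∑ c : Fin 2, L6 β v (a, m jf) (c, n jf) * Sfun M β v m n j c b := by
      show Sfun M β v m n (j+1) a b
        = ∑ c : Fin 2, L6 β v (a, m ⟨j, h⟩) (c, n ⟨j, h⟩) * Sfun M β v m n j c b
      simp [Sfun, h]
    rw [hS]
    by_cases hT : ∀ k : Fin M, j + 1 ≤ (k:ℕ) → s k = n k
    · rw [if_pos hT, one_mul, show s jf = m jf from hsm]
      rcases fin2_cases (n jf) with hnj | hnj <;> rw [hnj] <;>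
        refine Finset.sum_congr rfl fun c _ => ?_
      · rw [if_pos ⟨rfl, hT⟩, if_neg (fun hc => by exact absurd hc.1 (by decide))]
        ring
      · rw [if_neg (fun hc => by exact absurd hc.1 (by decide)), if_pos ⟨rfl, hT⟩]
        ring
    · have hif0 : ∀ i : Fin 2,
          (if i = n jf ∧ (∀ k : Fin M, j + 1 ≤ (k:ℕ) → s k = n k) then (1:ℂ) else 0) = 0 :=
        fun i => if_neg (fun hc => hT hc.2)
      rw [if_neg hT, hif0, hif0, zero_mul]
      simp



lemma BopH_eq_Sfun (M : ℕ) (β v : ℂ) (m n : Fin M → Fin 2) :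
    BopH M β v m n = Sfun M β v m n M 0 1 := by
  show monoH M (L6 β v) (0, m) (1, n) = _
  rw [monoH_eq_Qgen]
  rw [Qgen_entry M β v m n M le_rfl m 0 1 (fun _ _ => rfl)]
  rw [if_pos (fun k hk => absurd k.isLt (by omega)), one_mul]

def dmn (M : ℕ) (m : Fin M → Fin 2) (t : ℕ) : ℤ :=
  if h : t < M then ((m ⟨t, h⟩ : ℕ) : ℤ) else 0

def Afun (M : ℕ) (m n : Fin M → Fin 2) (t : ℕ) : ℤ :=
  ∑ k ∈ Finset.Ico t M, (dmn M m k - dmn M n k)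

lemma Afun_rec (M : ℕ) (m n : Fin M → Fin 2) (t : ℕ) (h : t < M) :
    Afun M m n t = (dmn M m t - dmn M n t) + Afun M m n (t + 1) := by
  rw [Afun, Afun, Finset.sum_eq_sum_Ico_succ_bot h]

lemma Afun_of_ge (M : ℕ) (m n : Fin M → Fin 2) (t : ℕ) (h : M ≤ t) :
    Afun M m n t = 0 := by
  rw [Afun, Finset.Ico_eq_empty (by omega), Finset.sum_empty]

def wt (M : ℕ) (β z : ℂ) (m n : Fin M → Fin 2) (t : ℕ) : ℂ :=
  z ^ (Afun M m n t).toNat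
  * ((1 + β * z)⁻¹) ^ (if dmn M m t = 0 ∧ dmn M n t = 1 then 0 else 1)
  * 2 ^ (if dmn M m t = 1 ∧ dmn M n t = 0 then 1 else 0)
  * (1 + 2 * β * z) ^ (if dmn M m t = 1 ∧ dmn M n t = 1 ∧ Afun M m n (t+1) = 0 then 1 else 0)

def Pprod (M : ℕ) (β z : ℂ) (m n : Fin M → Fin 2) (j : ℕ) : ℂ :=
  ∏ t ∈ Finset.range j, wt M β z m n t

lemma L6_entry_zero (β v : ℂ) (m n : Fin M → Fin 2)
    (j : ℕ) (h : j < M) (a c : Fin 2)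
    (hA0 : ((c : ℕ) : ℤ) = Afun M m n j)
    (hA1 : ((a : ℕ) : ℤ) ≠ Afun M m n (j + 1)) :
    L6 β v (a, m ⟨j, h⟩) (c, n ⟨j, h⟩) = 0 := by
  have hrec := Afun_rec M m n j h
  have hdm : dmn M m j = ((m ⟨j, h⟩ : ℕ) : ℤ) := dif_pos h
  have hdn : dmn M n j = ((n ⟨j, h⟩ : ℕ) : ℤ) := dif_pos h
  rcases fin2_cases a with ha | ha <;> rcases fin2_cases c with hc | hc <;>
    rcases fin2_cases (m ⟨j, h⟩) with hm | hm <;>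
    rcases fin2_cases (n ⟨j, h⟩) with hn | hn <;>
    rw [ha] at hA1 ⊢ <;> rw [hc] at hA0 ⊢ <;> rw [hm] at hdm ⊢ <;> rw [hn] at hdn ⊢ <;>
    simp only [Fin.val_zero, Fin.val_one, Nat.cast_zero, Nat.cast_one] at hA0 hA1 hdm hdn <;>
    first
      | omega
      | simp [L6, Prod.ext_iff]

lemma L6_entry_wt (M : ℕ) (β v : ℂ) (hv1 : β * v ≠ 1) (z : ℂ) (hz : z = v / (1 - β * v))
    (m n : Fin M → Fin 2) (j : ℕ) (h : j < M) (a c : Fin 2)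
    (hA0 : ((c : ℕ) : ℤ) = Afun M m n j)
    (hA1 : ((a : ℕ) : ℤ) = Afun M m n (j + 1)) :
    L6 β v (a, m ⟨j, h⟩) (c, n ⟨j, h⟩) = wt M β z m n j := by
  have hrec := Afun_rec M m n j h
  have hdm : dmn M m j = ((m ⟨j, h⟩ : ℕ) : ℤ) := dif_pos h
  have hdn : dmn M n j = ((n ⟨j, h⟩ : ℕ) : ℤ) := dif_pos h
  have h1v : (1 : ℂ) - β * v ≠ 0 := sub_ne_zero.mpr (fun hc => hv1 hc.symm)
  have h1v' : (1 : ℂ) - v * β ≠ 0 := by rwa [mul_comm]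
  rcases fin2_cases a with ha | ha <;> rcases fin2_cases c with hc | hc <;>
    rcases fin2_cases (m ⟨j, h⟩) with hm | hm <;>
    rcases fin2_cases (n ⟨j, h⟩) with hn | hn <;>
    rw [ha] at hA1 ⊢ <;> rw [hc] at hA0 ⊢ <;> rw [hm] at hdm ⊢ <;> rw [hn] at hdn ⊢ <;>
    simp only [Fin.val_zero, Fin.val_one, Nat.cast_zero, Nat.cast_one] at hA0 hA1 hdm hdn <;>
    first
      | omega
      | (rw [wt, hdm, hdn, ← hA0, ← hA1, hz]
         norm_num [L6, Prod.ext_iff]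
         try field_simp
         try ring)



lemma Sfun_eval (M : ℕ) (β v : ℂ) (hv1 : β * v ≠ 1) (z : ℂ) (hz : z = v / (1 - β * v))
    (m n : Fin M → Fin 2) (hA0 : Afun M m n 0 = 1) :
    ∀ j, j ≤ M → ∀ a : Fin 2, Sfun M β v m n j a 1 =
      if (∀ k, k ≤ j → Afun M m n k = 0 ∨ Afun M m n k = 1) ∧ ((a : ℕ) : ℤ) = Afun M m n j
      then Pprod M β z m n j else 0 := by
  intro j
  induction j with
  | zero =>
    intro _ a
    have hcond : ∀ k, k ≤ 0 → Afun M m n k = 0 ∨ Afun M m n k = 1 := by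
      intro k hk
      have : k = 0 := by omega
      rw [this, hA0]
      right; rfl
    rcases fin2_cases a with ha | ha <;> rw [ha] <;>
      simp [Sfun, Pprod, hcond, hA0]
  | succ j ih =>
    intro hj a
    have h : j < M := hj
    have hS : Sfun M β v m n (j+1) a 1
        = ∑ c : Fin 2, L6 β v (a, m ⟨j, h⟩) (c, n ⟨j, h⟩) * Sfun M β v m n j c 1 := by
      simp [Sfun, h]
    rw [hS]
    by_cases hval : ∀ k, k ≤ j → Afun M m n k = 0 ∨ Afun M m n k = 1
    · obtain ⟨c0, hc0⟩ : ∃ c0 : Fin 2, ((c0 : ℕ) : ℤ) = Afun M m n j := by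
        rcases hval j le_rfl with h0 | h0
        · exact ⟨0, by simp [h0]⟩
        · exact ⟨1, by simp [h0]⟩
      have hcol : ∀ c : Fin 2, Sfun M β v m n j c 1
          = if c = c0 then Pprod M β z m n j else 0 := by
        intro c
        rw [ih (by omega) c]
        by_cases hcc : c = c0
        · rw [if_pos hcc, if_pos ⟨hval, by rw [hcc]; exact hc0⟩]
        · rw [if_neg hcc, if_neg]
          rintro ⟨-, hcast⟩
          apply hcc
          have hv' : ((c : ℕ) : ℤ) = ((c0 : ℕ) : ℤ) := by rw [hcast, hc0]
          exact Fin.ext (by exact_mod_cast hv')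
      simp only [hcol, mul_ite, mul_zero]
      rw [Finset.sum_ite_eq' Finset.univ c0]
      simp only [Finset.mem_univ, if_true]
      by_cases hgood : ((a : ℕ) : ℤ) = Afun M m n (j+1)
          ∧ (Afun M m n (j+1) = 0 ∨ Afun M m n (j+1) = 1)
      · have hcond7 : ∀ k, k ≤ j + 1 → Afun M m n k = 0 ∨ Afun M m n k = 1 := by
          intro k hk
          by_cases hkj : k ≤ j
          · exact hval k hkj
          · have hkk : k = j + 1 := by omega
            rw [hkk]; exact hgood.2
        rw [L6_entry_wt M β v hv1 z hz m n j h a c0 hc0 hgood.1]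
        rw [if_pos ⟨hcond7, hgood.1⟩]
        have hP : Pprod M β z m n (j+1) = Pprod M β z m n j * wt M β z m n j :=
          Finset.prod_range_succ _ _
        rw [hP]
        ring
      · have hA1ne : ((a : ℕ) : ℤ) ≠ Afun M m n (j+1) := by
          intro hcast
          apply hgood
          refine ⟨hcast, ?_⟩
          rcases fin2_cases a with ha | ha <;> rw [ha] at hcast <;>
            [left; right] <;> simp at hcast <;> omega
        rw [L6_entry_zero β v m n j h a c0 hc0 hA1ne, zero_mul, if_neg]
        rintro ⟨-, hcast⟩
        exact hA1ne hcast
    · have hz0 : ∀ c : Fin 2, Sfun M β v m n j c 1 = 0 :=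
        fun c => by rw [ih (by omega) c, if_neg (fun hc => hval hc.1)]
      rw [if_neg]
      · simp [hz0]
      · rintro ⟨hv', -⟩
        exact hval (fun k hk => hv' k (by omega))

lemma BopH_eval (M : ℕ) (β v : ℂ) (hv1 : β * v ≠ 1) (z : ℂ) (hz : z = v / (1 - β * v))
    (m n : Fin M → Fin 2) (hA0 : Afun M m n 0 = 1) :
    BopH M β v m n =
      if (∀ k, k ≤ M → Afun M m n k = 0 ∨ Afun M m n k = 1)
      then Pprod M β z m n M else 0 := by
  rw [BopH_eq_Sfun, Sfun_eval M β v hv1 z hz m n hA0 M le_rfl 0]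
  have hAM : Afun M m n M = 0 := Afun_of_ge M m n M le_rfl
  by_cases hval : ∀ k, k ≤ M → Afun M m n k = 0 ∨ Afun M m n k = 1
  · rw [if_pos hval, if_pos ⟨hval, by simp [hAM]⟩]
  · rw [if_neg hval, if_neg (fun hc => hval hc.1)]



lemma dmn_eq_one_iff (M : ℕ) (m : Fin M → Fin 2) (t : ℕ) (h : t < M) :
    dmn M m t = 1 ↔ m ⟨t, h⟩ = 1 := by
  rw [dmn, dif_pos h]
  rcases fin2_cases (m ⟨t, h⟩) with hm | hm <;> rw [hm] <;> simp

lemma dmn_eq_zero_iff (M : ℕ) (m : Fin M → Fin 2) (t : ℕ) (h : t < M) :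
    dmn M m t = 0 ↔ m ⟨t, h⟩ = 0 := by
  rw [dmn, dif_pos h]
  rcases fin2_cases (m ⟨t, h⟩) with hm | hm <;> rw [hm] <;> simp

lemma dmn_mem (M : ℕ) (m : Fin M → Fin 2) (t : ℕ) :
    dmn M m t = 0 ∨ dmn M m t = 1 := by
  by_cases h : t < M
  · rcases fin2_cases (m ⟨t, h⟩) with hm | hm
    · left; exact (dmn_eq_zero_iff M m t h).mpr hm
    · right; exact (dmn_eq_one_iff M m t h).mpr hm
  · left; rw [dmn, dif_neg h]

lemma card_filter_val_lt (n c : ℕ) (hc : c ≤ n) :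
    ((Finset.univ : Finset (Fin n)).filter fun j : Fin n => (j : ℕ) < c).card = c := by
  conv_rhs => rw [show c = (Finset.range c).card from (Finset.card_range c).symm]
  refine Finset.card_bij (fun j _ => (j : ℕ)) ?_ ?_ ?_
  · intro j hj
    rw [Finset.mem_filter] at hj
    exact Finset.mem_range.mpr hj.2
  · intro j1 _ j2 _ hval
    exact Fin.ext hval
  · intro t ht
    rw [Finset.mem_range] at ht
    exact ⟨⟨t, by omega⟩, Finset.mem_filter.mpr ⟨Finset.mem_univ _, ht⟩, rfl⟩

lemma mem_downset_iff {P : ℕ} (Q : Fin P → Prop) [DecidablePred Q]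
    (hdown : ∀ i j : Fin P, i ≤ j → Q j → Q i) (j : Fin P) :
    Q j ↔ (j : ℕ) < (Finset.univ.filter Q).card := by
  classical
  constructor
  · intro hQ
    have hsub : (Finset.univ.filter fun i : Fin P => (i : ℕ) < (j : ℕ) + 1)
        ⊆ Finset.univ.filter Q := by
      intro i hi
      rw [Finset.mem_filter] at hi ⊢
      exact ⟨Finset.mem_univ _, hdown i j (by omega) hQ⟩
    have := Finset.card_le_card hsub
    rwa [card_filter_val_lt P ((j : ℕ) + 1) (by omega)] at this
  · intro hlt
    by_contra hQ
    have hsub : Finset.univ.filter Q ⊆ (Finset.univ.filter fun i : Fin P => (i : ℕ) < (j : ℕ)) := by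
      intro i hi
      rw [Finset.mem_filter] at hi ⊢
      refine ⟨Finset.mem_univ _, ?_⟩
      by_contra hij
      exact hQ (hdown j i (by omega) hi.2)
    have := Finset.card_le_card hsub
    rw [card_filter_val_lt P (j : ℕ) (by omega)] at this
    omega

lemma sum_dmn (M P : ℕ) (m : Fin M → Fin 2) (y : Fin P → ℕ)
    (hyinj : Function.Injective y) (hyr : ∀ j, 1 ≤ y j ∧ y j ≤ M)
    (hycorr : ∀ i : Fin M, m i = 1 ↔ ∃ j, y j = (i : ℕ) + 1) (t : ℕ) :
    (∑ k ∈ Finset.Ico t M, dmn M m k)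
      = ((Finset.univ.filter fun j : Fin P => t + 1 ≤ y j).card : ℤ) := by
  have step1 : ∀ k ∈ Finset.Ico t M,
      dmn M m k = ∑ j : Fin P, (if y j = k + 1 then (1 : ℤ) else 0) := by
    intro k hk
    have hkM : k < M := (Finset.mem_Ico.mp hk).2
    rcases fin2_cases (m ⟨k, hkM⟩) with hm | hm
    · rw [(dmn_eq_zero_iff M m k hkM).mpr hm]
      rw [Finset.sum_eq_zero]
      intro j _
      rw [if_neg]
      intro hc
      have : m ⟨k, hkM⟩ = 1 := (hycorr ⟨k, hkM⟩).mpr ⟨j, hc⟩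
      rw [hm] at this
      exact absurd this (by decide)
    · rw [(dmn_eq_one_iff M m k hkM).mpr hm]
      obtain ⟨j0, hj0⟩ := (hycorr ⟨k, hkM⟩).mp hm
      rw [Finset.sum_eq_single j0]
      · rw [if_pos hj0]
      · intro j _ hjne
        rw [if_neg]
        intro hc
        exact hjne (hyinj (hc.trans hj0.symm))
      · intro hcon
        exact absurd (Finset.mem_univ j0) hcon
  have step2 : ∀ j : Fin P,
      (∑ k ∈ Finset.Ico t M, if y j = k + 1 then (1:ℤ) else 0)
        = (if t + 1 ≤ y j then (1:ℤ) else 0) := by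
    intro j
    have hy1 := (hyr j).1
    have hy2 := (hyr j).2
    have h1 : ∀ k ∈ Finset.Ico t M, (if y j = k + 1 then (1:ℤ) else 0)
        = (if k = y j - 1 then (1:ℤ) else 0) := by
      intro k _
      exact if_congr ⟨fun hc => by omega, fun hc => by omega⟩ rfl rfl
    rw [Finset.sum_congr rfl h1,
      Finset.sum_ite_eq' (Finset.Ico t M) (y j - 1) (fun _ => (1:ℤ))]
    by_cases hmem : t + 1 ≤ y j
    · rw [if_pos (Finset.mem_Ico.mpr ⟨by omega, by omega⟩), if_pos hmem]
    · rw [if_neg, if_neg hmem]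
      intro hc
      rw [Finset.mem_Ico] at hc
      omega
  rw [Finset.sum_congr rfl step1, Finset.sum_comm,
    Finset.sum_congr rfl (fun j _ => step2 j), Finset.sum_boole]



lemma card_common (P Q : ℕ) (y : Fin P → ℕ) (x : Fin Q → ℕ)
    (hy : Function.Injective y) (hx : Function.Injective x) :
    (Finset.univ.filter fun j : Fin P => ∃ k, x k = y j).card
      = (Finset.univ.filter fun k : Fin Q => ∃ j, y j = x k).card := by
  classical
  refine Finset.card_bij (fun j hj => (Finset.mem_filter.mp hj).2.choose) ?_ ?_ ?_
  · intro j hj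
    have hspec := (Finset.mem_filter.mp hj).2.choose_spec
    exact Finset.mem_filter.mpr ⟨Finset.mem_univ _, ⟨j, hspec.symm⟩⟩
  · intro j1 hj1 j2 hj2 heq
    have h1 := (Finset.mem_filter.mp hj1).2.choose_spec
    have h2 := (Finset.mem_filter.mp hj2).2.choose_spec
    apply hy
    rw [← h1, ← h2]
    exact congrArg x heq
  · intro k hk
    obtain ⟨j, hj⟩ := (Finset.mem_filter.mp hk).2
    have hjmem : j ∈ Finset.univ.filter (fun j : Fin P => ∃ k, x k = y j) :=
      Finset.mem_filter.mpr ⟨Finset.mem_univ _, ⟨k, hj.symm⟩⟩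
    refine ⟨j, hjmem, ?_⟩
    apply hx
    have hsp := (Finset.mem_filter.mp hjmem).2.choose_spec
    rw [hsp, ← hj]

lemma c_notin_card (M P Q : ℕ) (m n : Fin M → Fin 2) (y : Fin P → ℕ) (x : Fin Q → ℕ)
    (hyinj : Function.Injective y) (hyr : ∀ j, 1 ≤ y j ∧ y j ≤ M)
    (hycorr : ∀ i : Fin M, m i = 1 ↔ ∃ j, y j = (i : ℕ) + 1)
    (hxcorr : ∀ i : Fin M, n i = 1 ↔ ∃ k, x k = (i : ℕ) + 1) :
    ((Finset.range M).filter fun t => dmn M m t = 1 ∧ dmn M n t = 0).card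
      = (Finset.univ.filter fun j : Fin P => ∀ k : Fin Q, x k ≠ y j).card := by
  classical
  refine (Finset.card_bij (fun j _ => y j - 1) ?_ ?_ ?_).symm
  · intro j hj
    rw [Finset.mem_filter] at hj
    have h1 := (hyr j).1
    have h2 := (hyr j).2
    have ht : y j - 1 < M := by omega
    refine Finset.mem_filter.mpr ⟨Finset.mem_range.mpr ht, ?_, ?_⟩
    · exact (dmn_eq_one_iff M m _ ht).mpr ((hycorr ⟨y j - 1, ht⟩).mpr
        ⟨j, show y j = (y j - 1) + 1 by omega⟩)
    · rcases dmn_mem M n (y j - 1) with h0 | h0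
      · exact h0
      · exfalso
        obtain ⟨k, hk⟩ := (hxcorr ⟨y j - 1, ht⟩).mp ((dmn_eq_one_iff M n _ ht).mp h0)
        apply hj.2 k
        have hk' : x k = (y j - 1) + 1 := hk
        omega
  · intro j1 hj1 j2 hj2 heq
    have heq' : y j1 - 1 = y j2 - 1 := heq
    have h1 := (hyr j1).1
    have h2 := (hyr j2).1
    exact hyinj (by omega)
  · intro t ht
    rw [Finset.mem_filter, Finset.mem_range] at ht
    obtain ⟨htM, h1, h0⟩ := ht
    obtain ⟨j, hj⟩ := (hycorr ⟨t, htM⟩).mp ((dmn_eq_one_iff M m t htM).mp h1)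
    have hj' : y j = t + 1 := hj
    refine ⟨j, Finset.mem_filter.mpr ⟨Finset.mem_univ _, ?_⟩, show y j - 1 = t by omega⟩
    intro k hk
    have hn1 : n ⟨t, htM⟩ = 1 := (hxcorr ⟨t, htM⟩).mpr ⟨k, show x k = t + 1 by omega⟩
    have := (dmn_eq_one_iff M n t htM).mpr hn1
    omega

end SVaux

open SVaux Finset in
set_option maxHeartbeats 1000000 in
theorem six_vertex_B_matrix_elements (M N : ℕ) (hM : 1 ≤ M) (β v : ℂ)
    (hv1 : β * v ≠ 1) (hv2 : β * v ≠ -1)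
    (z : ℂ) (hz : z = v / (1 - β * v))
    (m : Fin M → Fin 2) (hm : ∑ j : Fin M, ((m j : ℕ)) = N + 1)
    (n : Fin M → Fin 2) (hn : ∑ j : Fin M, ((n j : ℕ)) = N)
    (y : Fin (N + 1) → ℕ) (hydec : StrictAnti y)
    (hyrange : ∀ j, 1 ≤ y j ∧ y j ≤ M)
    (hycorr : ∀ i : Fin M, m i = 1 ↔ ∃ j, y j = (i : ℕ) + 1)
    (x : Fin N → ℕ) (hxdec : StrictAnti x)
    (hxrange : ∀ j, 1 ≤ x j ∧ x j ≤ M)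
    (hxcorr : ∀ i : Fin M, n i = 1 ↔ ∃ j, x j = (i : ℕ) + 1) :
    ((∀ j : Fin N, x j ≤ y j.castSucc ∧ y j.succ ≤ x j) →
      BopH M β v m n =
        ((1 + 2 * β * z) / (1 + β * z) ^ (M + 1)) *
          (2 * (1 + β * z) / (1 + 2 * β * z)) ^
            ((Finset.univ.filter fun j : Fin (N + 1) => ∀ k : Fin N, x k ≠ y j).card) *
          z ^ ((∑ j : Fin (N + 1), y j) - (∑ j : Fin N, x j)) *
          ∏ j : Fin N, (1 + 2 * β * z * (if x j = y j.succ then 0 else 1))) ∧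
      (¬ (∀ j : Fin N, x j ≤ y j.castSucc ∧ y j.succ ≤ x j) →
        BopH M β v m n = 0) := by
  classical
  have hyinj : Function.Injective y := hydec.injective
  have hxinj : Function.Injective x := hxdec.injective
  set Ny : ℕ → ℕ := fun t => (univ.filter fun j : Fin (N+1) => t + 1 ≤ y j).card with hNydef
  set Nx : ℕ → ℕ := fun t => (univ.filter fun k : Fin N => t + 1 ≤ x k).card with hNxdef
  have hAeq : ∀ t, Afun M m n t = (Ny t : ℤ) - (Nx t : ℤ) := by
    intro t
    rw [Afun, Finset.sum_sub_distrib,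
      sum_dmn M (N+1) m y hyinj hyrange hycorr t,
      sum_dmn M N n x hxinj hxrange hxcorr t]
  have hNymem : ∀ t (j : Fin (N+1)), t + 1 ≤ y j ↔ (j : ℕ) < Ny t := by
    intro t j
    exact mem_downset_iff _ (fun i j hij hQ => le_trans hQ (hydec.antitone hij)) j
  have hNxmem : ∀ t (k : Fin N), t + 1 ≤ x k ↔ (k : ℕ) < Nx t := by
    intro t k
    exact mem_downset_iff _ (fun i j hij hQ => le_trans hQ (hxdec.antitone hij)) k
  have hNyy : ∀ j : Fin (N+1), Ny (y j) = (j : ℕ) := by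
    intro j
    have hfe : (univ.filter fun j' : Fin (N+1) => y j + 1 ≤ y j')
        = (univ.filter fun j' : Fin (N+1) => (j' : ℕ) < (j : ℕ)) := by
      apply Finset.filter_congr
      intro j' _
      constructor
      · intro hlt
        have h2 : y j < y j' := by omega
        have := hydec.lt_iff_gt.mp h2
        exact this
      · intro hlt
        have : y j < y j' := hydec.lt_iff_gt.mpr hlt
        omega
    rw [hNydef]
    simp only []
    rw [hfe, card_filter_val_lt (N+1) (j : ℕ) (by omega)]
  have hNxx : ∀ k : Fin N, Nx (x k) = (k : ℕ) := by
    intro k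
    have hfe : (univ.filter fun k' : Fin N => x k + 1 ≤ x k')
        = (univ.filter fun k' : Fin N => (k' : ℕ) < (k : ℕ)) := by
      apply Finset.filter_congr
      intro k' _
      constructor
      · intro hlt
        have h2 : x k < x k' := by omega
        exact hxdec.lt_iff_gt.mp h2
      · intro hlt
        have : x k < x k' := hxdec.lt_iff_gt.mpr hlt
        omega
    rw [hNxdef]
    simp only []
    rw [hfe, card_filter_val_lt N (k : ℕ) (by omega)]
  have hNy0 : Ny 0 = N + 1 := by
    rw [hNydef]
    simp only []
    rw [Finset.filter_true_of_mem (fun j _ => by have := (hyrange j).1; omega)]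
    simp
  have hNx0 : Nx 0 = N := by
    rw [hNxdef]
    simp only []
    rw [Finset.filter_true_of_mem (fun k _ => by have := (hxrange k).1; omega)]
    simp
  have hA0 : Afun M m n 0 = 1 := by
    rw [hAeq 0, hNy0, hNx0]
    push_cast
    ring
  have hNyle : ∀ t, Ny t ≤ N + 1 := by
    intro t
    rw [hNydef]
    have := Finset.card_filter_le (Finset.univ : Finset (Fin (N+1))) (fun j => t + 1 ≤ y j)
    simpa using this
  have hNxle : ∀ t, Nx t ≤ N := by
    intro t
    rw [hNxdef]
    have := Finset.card_filter_le (Finset.univ : Finset (Fin N)) (fun k => t + 1 ≤ x k)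
    simpa using this
  -- interlacing implies validity
  have hval_of_int : (∀ j : Fin N, x j ≤ y j.castSucc ∧ y j.succ ≤ x j) →
      ∀ k, k ≤ M → Afun M m n k = 0 ∨ Afun M m n k = 1 := by
    intro hint t _
    have claim1 : Nx t ≤ Ny t := by
      by_contra hcon
      push_neg at hcon
      have hNyN : Ny t < N := by have := hNxle t; omega
      set k : Fin N := ⟨Ny t, by omega⟩ with hkdef
      have hxk : t + 1 ≤ x k := (hNxmem t k).mpr (by rw [hkdef]; exact hcon)
      have hyk : ¬ (t + 1 ≤ y k.castSucc) := by
        rw [hNymem t k.castSucc]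
        simp [hkdef]
      have := (hint k).1
      omega
    have claim2 : Ny t ≤ Nx t + 1 := by
      by_contra hcon
      push_neg at hcon
      have hNxN : Nx t < N := by have := hNyle t; omega
      set k : Fin N := ⟨Nx t, by omega⟩ with hkdef
      have hyk : t + 1 ≤ y k.succ := by
        rw [hNymem t k.succ]
        have : ((k.succ : Fin (N+1)) : ℕ) = Nx t + 1 := by simp [hkdef]
        omega
      have hxk : ¬ (t + 1 ≤ x k) := by
        rw [hNxmem t k]
        simp [hkdef]
      have := (hint k).2
      omega
    rw [hAeq t]
    omega
  -- validity implies interlacing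
  have hint_of_val : (∀ k, k ≤ M → Afun M m n k = 0 ∨ Afun M m n k = 1) →
      ∀ j : Fin N, x j ≤ y j.castSucc ∧ y j.succ ≤ x j := by
    intro hval j
    constructor
    · by_contra hcon
      push_neg at hcon
      set t := y j.castSucc with htdef
      have htM : t ≤ M := (hyrange j.castSucc).2
      have hNyt : Ny t = (j : ℕ) := by
        rw [htdef, hNyy j.castSucc]
        simp
      have hNxt : (j : ℕ) < Nx t := by
        rw [← hNxmem t j]
        omega
      have := hval t htM
      rw [hAeq t] at this
      omega
    · by_contra hcon
      push_neg at hcon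
      set t := x j with htdef
      have htM : t ≤ M := (hxrange j).2
      have hNxt : Nx t = (j : ℕ) := hNxx j
      have hNyt : ((j.succ : Fin (N+1)) : ℕ) < Ny t := by
        rw [← hNymem t j.succ]
        omega
      have hjs : ((j.succ : Fin (N+1)) : ℕ) = (j : ℕ) + 1 := by simp
      have := hval t htM
      rw [hAeq t] at this
      omega
  constructor
  · -- main formula
    intro hint
    have hval := hval_of_int hint
    rw [BopH_eval M β v hv1 z hz m n hA0, if_pos hval]
    -- nonzero denominators
    have h1v : (1:ℂ) - β * v ≠ 0 := sub_ne_zero.mpr (fun hc => hv1 hc.symm)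
    have h2v : (1:ℂ) + β * v ≠ 0 := by
      intro hc
      apply hv2
      linear_combination hc
    have hwval : (1 + β * z) = (1 - β*v)⁻¹ := by
      rw [hz]
      field_simp
      ring
    have huval : (1 + 2 * β * z) = (1 + β*v) * (1 - β*v)⁻¹ := by
      rw [hz]
      field_simp
      ring
    have hw0 : (1 + β * z) ≠ 0 := by
      rw [hwval]; exact inv_ne_zero h1v
    have hu0 : (1 + 2 * β * z) ≠ 0 := by
      rw [huval]; exact mul_ne_zero h2v (inv_ne_zero h1v)
    -- counts
    set K := (univ.filter fun j : Fin (N + 1) => ∀ k : Fin N, x k ≠ y j).card with hKdef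
    set K' := (univ.filter fun k : Fin N => ∀ j : Fin (N+1), y j ≠ x k).card with hK'def
    set E6 := (univ.filter fun k : Fin N => x k = y k.succ).card with hE6def
    set c3 := ((range M).filter fun t => dmn M m t = 1 ∧ dmn M n t = 0).card with hc3def
    set c4 := ((range M).filter fun t => dmn M m t = 0 ∧ dmn M n t = 1).card with hc4def
    set cb4 := ((range M).filter fun t => ¬(dmn M m t = 0 ∧ dmn M n t = 1)).card with hcb4def
    set c2 := ((range M).filter fun t =>
      dmn M m t = 1 ∧ dmn M n t = 1 ∧ Afun M m n (t+1) = 0).card with hc2def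
    set c6 := ((range M).filter fun t =>
      dmn M m t = 1 ∧ dmn M n t = 1 ∧ Afun M m n (t+1) = 1).card with hc6def
    set Esum := ∑ t ∈ range M, (Afun M m n t).toNat with hEsumdef
    -- product formula
    have hPP : Pprod M β z m n M
        = z ^ Esum * ((1 + β * z)⁻¹) ^ cb4 * 2 ^ c3 * (1 + 2 * β * z) ^ c2 := by
      rw [Pprod]
      simp only [wt]
      rw [Finset.prod_mul_distrib, Finset.prod_mul_distrib, Finset.prod_mul_distrib]
      rw [Finset.prod_pow_eq_pow_sum, Finset.prod_pow_eq_pow_sum,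
        Finset.prod_pow_eq_pow_sum, Finset.prod_pow_eq_pow_sum]
      congr 1
      · congr 1
        · congr 1
          · -- inverse-power exponent
            congr 1
            have hsw : ∀ t ∈ range M,
                (if dmn M m t = 0 ∧ dmn M n t = 1 then 0 else 1)
                  = (if ¬(dmn M m t = 0 ∧ dmn M n t = 1) then 1 else 0) := by
              intro t _
              split_ifs with h1 h2 <;> tauto
            rw [Finset.sum_congr rfl hsw, hcb4def]
            exact (Finset.card_filter _ _).symm
        · congr 1
          rw [hc3def]
          exact (Finset.card_filter _ _).symm
      · congr 1
        rw [hc2def]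
        exact (Finset.card_filter _ _).symm
    -- counting identities
    have hc3K : c3 = K := by
      rw [hc3def, hKdef]
      exact c_notin_card M (N+1) N m n y x hyinj hyrange hycorr hxcorr
    have hc4K' : c4 = K' := by
      rw [hc4def, hK'def]
      have := c_notin_card M N (N+1) n m x y hxinj hxrange hxcorr hycorr
      rw [← this]
      congr 1
      apply Finset.filter_congr
      intro t _
      tauto
    have hKK' : K = K' + 1 := by
      have h1 := Finset.card_filter_add_card_filter_not
        (s := (univ : Finset (Fin (N+1)))) (p := fun j => ∀ k : Fin N, x k ≠ y j)
      have h2 := Finset.card_filter_add_card_filter_not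
        (s := (univ : Finset (Fin N))) (p := fun k => ∀ j : Fin (N+1), y j ≠ x k)
      have h3 : (univ.filter fun j : Fin (N+1) => ¬∀ k : Fin N, x k ≠ y j)
          = (univ.filter fun j : Fin (N+1) => ∃ k, x k = y j) := by
        apply Finset.filter_congr
        intro j _
        constructor
        · intro hc
          push_neg at hc
          exact hc
        · intro ⟨k, hk⟩ hc
          exact hc k hk
      have h4 : (univ.filter fun k : Fin N => ¬∀ j : Fin (N+1), y j ≠ x k)
          = (univ.filter fun k : Fin N => ∃ j, y j = x k) := by
        apply Finset.filter_congr
        intro k _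
        constructor
        · intro hc
          push_neg at hc
          exact hc
        · intro ⟨j, hj⟩ hc
          exact hc j hj
      have h5 := card_common (N+1) N y x hyinj hxinj
      rw [h3] at h1
      rw [h4] at h2
      rw [Finset.card_univ, Fintype.card_fin] at h1 h2
      rw [← hKdef] at h1
      rw [← hK'def] at h2
      omega
    have hS1card : ((range M).filter fun t => dmn M m t = 1).card = N + 1 := by
      have hcards : ((univ.filter fun j : Fin (N+1) => 0 + 1 ≤ y j).card) = N + 1 := by
        rw [Finset.filter_true_of_mem (fun j _ => by have := (hyrange j).1; omega)]
        simp
      have hsum : (∑ k ∈ Finset.Ico 0 M, dmn M m k) = ((N + 1 : ℕ) : ℤ) := by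
        rw [sum_dmn M (N+1) m y hyinj hyrange hycorr 0, hcards]
      rw [show Finset.Ico 0 M = range M from by rw [Finset.range_eq_Ico]] at hsum
      have h2 : ((((range M).filter fun t => dmn M m t = 1).card : ℤ))
          = ∑ t ∈ range M, dmn M m t := by
        rw [Finset.card_filter]
        push_cast
        apply Finset.sum_congr rfl
        intro t _
        rcases dmn_mem M m t with h | h <;> rw [h] <;> simp
      rw [hsum] at h2
      exact_mod_cast h2
    have hsplit1 : c3 + ((range M).filter fun t =>
        dmn M m t = 1 ∧ dmn M n t = 1).card = N + 1 := by
      have h1 := Finset.card_filter_add_card_filter_not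
        (s := (range M).filter fun t => dmn M m t = 1) (p := fun t => dmn M n t = 0)
      have e1 : (((range M).filter fun t => dmn M m t = 1).filter fun t => dmn M n t = 0)
          = ((range M).filter fun t => dmn M m t = 1 ∧ dmn M n t = 0) := by
        rw [Finset.filter_filter]
      have e2 : (((range M).filter fun t => dmn M m t = 1).filter fun t => ¬ dmn M n t = 0)
          = ((range M).filter fun t => dmn M m t = 1 ∧ dmn M n t = 1) := by
        rw [Finset.filter_filter]
        apply Finset.filter_congr
        intro t _
        rcases dmn_mem M n t with h | h <;> simp [h]
      rw [e1, e2, hS1card] at h1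
      rw [hc3def]
      exact h1
    have hsplit2 : c2 + c6 = ((range M).filter fun t =>
        dmn M m t = 1 ∧ dmn M n t = 1).card := by
      have h1 := Finset.card_filter_add_card_filter_not
        (s := (range M).filter fun t => dmn M m t = 1 ∧ dmn M n t = 1)
        (p := fun t => Afun M m n (t+1) = 0)
      have e1 : (((range M).filter fun t => dmn M m t = 1 ∧ dmn M n t = 1).filter
            fun t => Afun M m n (t+1) = 0)
          = ((range M).filter fun t =>
            dmn M m t = 1 ∧ dmn M n t = 1 ∧ Afun M m n (t+1) = 0) := by
        rw [Finset.filter_filter]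
        apply Finset.filter_congr
        intro t _
        tauto
      have e2 : (((range M).filter fun t => dmn M m t = 1 ∧ dmn M n t = 1).filter
            fun t => ¬ Afun M m n (t+1) = 0)
          = ((range M).filter fun t =>
            dmn M m t = 1 ∧ dmn M n t = 1 ∧ Afun M m n (t+1) = 1) := by
        rw [Finset.filter_filter]
        apply Finset.filter_congr
        intro t ht
        rw [Finset.mem_range] at ht
        have hv := hval (t+1) (by omega)
        constructor
        · rintro ⟨⟨ha, hb⟩, hc⟩
          exact ⟨ha, hb, by omega⟩
        · rintro ⟨ha, hb, hc⟩
          exact ⟨⟨ha, hb⟩, by omega⟩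
      rw [e1, e2] at h1
      rw [hc2def, hc6def]
      exact h1
    have hc6E6 : c6 = E6 := by
      rw [hc6def, hE6def]
      refine (Finset.card_bij (fun k _ => x k - 1) ?_ ?_ ?_).symm
      · intro k hk
        rw [Finset.mem_filter] at hk
        have hxy := hk.2
        have h1 := (hxrange k).1
        have h2 := (hxrange k).2
        have htM : x k - 1 < M := by omega
        refine Finset.mem_filter.mpr ⟨Finset.mem_range.mpr htM, ?_, ?_, ?_⟩
        · exact (dmn_eq_one_iff M m _ htM).mpr
            ((hycorr ⟨x k - 1, htM⟩).mpr ⟨k.succ, show y k.succ = (x k - 1) + 1 by omega⟩)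
        · exact (dmn_eq_one_iff M n _ htM).mpr
            ((hxcorr ⟨x k - 1, htM⟩).mpr ⟨k, show x k = (x k - 1) + 1 by omega⟩)
        · have hstep : x k - 1 + 1 = x k := by omega
          rw [hstep, hAeq (x k), hNxx k, hxy, hNyy k.succ]
          have hcs : ((k.succ : Fin (N+1)) : ℕ) = (k:ℕ) + 1 := by simp
          rw [hcs]
          push_cast
          ring
      · intro k1 hk1 k2 hk2 heq
        have heq' : x k1 - 1 = x k2 - 1 := heq
        have h1 := (hxrange k1).1
        have h2 := (hxrange k2).1
        exact hxinj (by omega)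
      · intro t ht
        rw [Finset.mem_filter, Finset.mem_range] at ht
        obtain ⟨htM, hm1, hn1, hA1⟩ := ht
        obtain ⟨j, hj⟩ := (hycorr ⟨t, htM⟩).mp ((dmn_eq_one_iff M m t htM).mp hm1)
        obtain ⟨k, hk⟩ := (hxcorr ⟨t, htM⟩).mp ((dmn_eq_one_iff M n t htM).mp hn1)
        have hj' : y j = t + 1 := hj
        have hk' : x k = t + 1 := hk
        have hNyv : Ny (t+1) = (j:ℕ) := by rw [← hj', hNyy j]
        have hNxv : Nx (t+1) = (k:ℕ) := by rw [← hk', hNxx k]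
        have hjk : (j:ℕ) = (k:ℕ) + 1 := by
          rw [hAeq (t+1), hNyv, hNxv] at hA1
          omega
        refine ⟨k, Finset.mem_filter.mpr ⟨Finset.mem_univ _, ?_⟩, show x k - 1 = t by omega⟩
        have hjs : j = k.succ := by
          apply Fin.ext
          simp [hjk]
        rw [hjs] at hj'
        omega
    have hcb4M : c4 + cb4 = M := by
      have h1 := Finset.card_filter_add_card_filter_not
        (s := range M) (p := fun t => dmn M m t = 0 ∧ dmn M n t = 1)
      rw [Finset.card_range] at h1
      rw [hc4def, hcb4def]
      exact h1
    -- z exponent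
    have hEsumZ : (Esum : ℤ) = (∑ j, (y j : ℤ)) - (∑ k, (x k : ℤ)) := by
      have h1 : (Esum : ℤ) = ∑ t ∈ range M, Afun M m n t := by
        rw [hEsumdef]
        push_cast
        apply Finset.sum_congr rfl
        intro t ht
        rw [Finset.mem_range] at ht
        have := hval t (by omega)
        omega
      have h3 : ∑ t ∈ range M, (Ny t : ℤ) = ∑ j, (y j : ℤ) := by
        have step1 : ∀ t ∈ range M, (Ny t : ℤ)
            = ∑ j, (if t + 1 ≤ y j then (1:ℤ) else 0) := by
          intro t _
          rw [hNydef]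
          simp only []
          rw [Finset.card_filter]
          push_cast
          rfl
        rw [Finset.sum_congr rfl step1, Finset.sum_comm]
        apply Finset.sum_congr rfl
        intro j _
        have step2 : ∀ t ∈ range M, (if t + 1 ≤ y j then (1:ℤ) else 0)
            = (if t < y j then (1:ℤ) else 0) := by
          intro t _
          exact if_congr (by omega) rfl rfl
        rw [Finset.sum_congr rfl step2, Finset.sum_boole]
        have hfil : ((range M).filter fun t => t < y j) = range (y j) := by
          ext t
          simp only [Finset.mem_filter, Finset.mem_range]
          have := (hyrange j).2
          omega
        rw [hfil, Finset.card_range]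
      have h4 : ∑ t ∈ range M, (Nx t : ℤ) = ∑ k, (x k : ℤ) := by
        have step1 : ∀ t ∈ range M, (Nx t : ℤ)
            = ∑ k, (if t + 1 ≤ x k then (1:ℤ) else 0) := by
          intro t _
          rw [hNxdef]
          simp only []
          rw [Finset.card_filter]
          push_cast
          rfl
        rw [Finset.sum_congr rfl step1, Finset.sum_comm]
        apply Finset.sum_congr rfl
        intro k _
        have step2 : ∀ t ∈ range M, (if t + 1 ≤ x k then (1:ℤ) else 0)
            = (if t < x k then (1:ℤ) else 0) := by
          intro t _
          exact if_congr (by omega) rfl rfl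
        rw [Finset.sum_congr rfl step2, Finset.sum_boole]
        have hfil : ((range M).filter fun t => t < x k) = range (x k) := by
          ext t
          simp only [Finset.mem_filter, Finset.mem_range]
          have := (hxrange k).2
          omega
        rw [hfil, Finset.card_range]
      rw [h1, Finset.sum_congr rfl (fun t _ => hAeq t), Finset.sum_sub_distrib, h3, h4]
    have hEnat : Esum = (∑ j, y j) - (∑ k, x k) := by
      have hcy : ((∑ j, y j : ℕ) : ℤ) = ∑ j, (y j : ℤ) := by push_cast; rfl
      have hcx : ((∑ k, x k : ℕ) : ℤ) = ∑ k, (x k : ℤ) := by push_cast; rfl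
      omega
    -- RHS product
    have hprodD : (∏ j : Fin N, (1 + 2*β*z * (if x j = y j.succ then (0:ℂ) else 1)))
        = (1 + 2*β*z) ^ (N - E6) := by
      have hstep : ∀ j ∈ (univ : Finset (Fin N)),
          (1 + 2*β*z*(if x j = y j.succ then (0:ℂ) else 1))
            = if x j = y j.succ then 1 else (1+2*β*z) := by
        intro j _
        split_ifs <;> ring
      rw [Finset.prod_congr rfl hstep, Finset.prod_ite, Finset.prod_const,
        Finset.prod_const, one_pow, one_mul]
      congr 1
      have h1 := Finset.card_filter_add_card_filter_not
        (s := (univ : Finset (Fin N))) (p := fun k => x k = y k.succ)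
      rw [Finset.card_univ, Fintype.card_fin, ← hE6def] at h1
      omega
    -- final assembly
    rw [hPP, hprodD, ← hEnat]
    have e2 : c2 + E6 + K = N + 1 := by omega
    have e4 : cb4 + K = M + 1 := by omega
    obtain ⟨K1, hK1⟩ : ∃ K1, K = K1 + 1 := ⟨K', hKK'⟩
    have eD : N - E6 = c2 + K1 := by omega
    rw [eD, hc3K, hK1, show M + 1 = cb4 + (K1 + 1) from by omega, div_pow, mul_pow]
    rw [inv_pow]
    generalize 1 + β * z = W at hw0 ⊢
    generalize 1 + 2 * β * z = U at hu0 ⊢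
    field_simp
    ring
  · intro hnint
    rw [BopH_eval M β v hv1 z hz m n hA0, if_neg (fun hval => hnint (hint_of_val hval))]
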